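/- arXiv:2605.02470 — 3 statements merged into one kernel-verified Lean document; each statement's English description precedes it below -/
import Mathlib

section
/- Let n ≥ 1 be an integer, let 2 ≤ p < q be reals, let a ≥ 0 and ν > 0. Let A : ℝⁿ → ℝⁿ be continuously differentiable and suppose that for all z, ζ ∈ ℝⁿ one has ν·(‖z‖^{p−2} + a·‖z‖^{q−2})·‖ζ‖² ≤ ⟪(DA(z))ζ, ζ⟫, where DA(z) is the (Fréchet) derivative of A at z. Then there exists a constant c ≥ 1, depending only on n, p, q and ν, such that for all z₁, z₂ ∈ ℝⁿ: ‖z₁−z₂‖^p + a·‖z₁−z₂‖^q ≤ c·⟪A(z₁) − A(z₂), z₁ − z₂⟫. -/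
open scoped RealInnerProductSpace

open Set in
set_option maxHeartbeats 1000000 in
/-- Strengthened monotonicity inequality (2.2) of the paper, valid in the
superquadratic range `2 ≤ p < q`. -/
theorem stmt_3 (n : ℕ) (hn : 1 ≤ n) (p q ν : ℝ) (hp : 2 ≤ p) (hpq : p < q) (hν : 0 < ν) :
    ∃ c : ℝ, 1 ≤ c ∧
      ∀ (a : ℝ), 0 ≤ a →
      ∀ (A : EuclideanSpace ℝ (Fin n) → EuclideanSpace ℝ (Fin n)), ContDiff ℝ 1 A →
      (∀ z ζ : EuclideanSpace ℝ (Fin n),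
        ν * (‖z‖ ^ (p - 2) + a * ‖z‖ ^ (q - 2)) * ‖ζ‖ ^ 2 ≤ ⟪(fderiv ℝ A z) ζ, ζ⟫) →
      ∀ z₁ z₂ : EuclideanSpace ℝ (Fin n),
        ‖z₁ - z₂‖ ^ p + a * ‖z₁ - z₂‖ ^ q ≤ c * ⟪A z₁ - A z₂, z₁ - z₂⟫ := by
  refine ⟨max 1 ((4 : ℝ) ^ (q - 1) / ν), le_max_left _ _, ?_⟩
  intro a ha A hA hmono z₁ z₂
  set c := max 1 ((4 : ℝ) ^ (q - 1) / ν) with hc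
  by_cases hz12 : z₁ = z₂
  · subst hz12
    simp [Real.zero_rpow (show p ≠ 0 by linarith), Real.zero_rpow (show q ≠ 0 by linarith)]
  set ζ : EuclideanSpace ℝ (Fin n) := z₁ - z₂ with hζ
  set x := ‖ζ‖ with hx
  have hxpos : 0 < x := by
    rw [hx, hζ]
    exact norm_pos_iff.mpr (sub_ne_zero.mpr hz12)
  -- path and its derivative
  clear hz12
  set γ : ℝ → EuclideanSpace ℝ (Fin n) := fun t => z₂ + t • ζ with hγ
  have hγ1 : γ 1 = z₁ := by simp [hγ, hζ]
  have hγ0 : γ 0 = z₂ := by simp [hγ]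
  set g : ℝ → ℝ := fun t => ⟪A (γ t), ζ⟫ with hg
  set D : ℝ → ℝ := fun t => ⟪(fderiv ℝ A (γ t)) ζ, ζ⟫ with hD
  have hAd : Differentiable ℝ A := hA.differentiable one_ne_zero
  have hgd : ∀ t : ℝ, HasDerivAt g (D t) t := by
    intro t
    have h1 : HasDerivAt γ ζ t := by
      simpa [hγ] using ((hasDerivAt_id t).smul_const ζ).const_add z₂
    have h2 : HasDerivAt (fun t => A (γ t)) ((fderiv ℝ A (γ t)) ζ) t :=
      (hAd (γ t)).hasFDerivAt.comp_hasDerivAt t h1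
    have h3 := h2.inner ℝ (hasDerivAt_const t ζ)
    simpa [hg, hD] using h3
  have hD0 : ∀ t : ℝ, 0 ≤ D t := by
    intro t
    refine le_trans ?_ (hmono (γ t) ζ)
    positivity
  -- mean value theorem on three subintervals
  have mvt : ∀ s u : ℝ, s < u → ∃ ξ ∈ Ioo s u, D ξ = (g u - g s) / (u - s) := by
    intro s u hsu
    exact exists_hasDerivAt_eq_slope g D hsu
      (fun t _ => (hgd t).continuousAt.continuousWithinAt) (fun t _ => hgd t)
  obtain ⟨ξ₁, hξ₁, hDξ₁⟩ := mvt 0 (1/4) (by norm_num)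
  obtain ⟨ξm, hξm, hDξm⟩ := mvt (1/4) (3/4) (by norm_num)
  obtain ⟨ξ₂, hξ₂, hDξ₂⟩ := mvt (3/4) 1 (by norm_num)
  have hsum : g 1 - g 0 = (1/4) * D ξ₂ + (1/2) * D ξm + (1/4) * D ξ₁ := by
    rw [hDξ₁, hDξm, hDξ₂]; ring
  have hmax : ∀ ξ ∈ ({ξ₁, ξ₂} : Set ℝ), (1/4) * D ξ ≤ g 1 - g 0 := by
    intro ξ hξ
    simp only [Set.mem_insert_iff, Set.mem_singleton_iff] at hξ
    rw [hsum]
    rcases hξ with h | h <;> rw [h] <;> nlinarith [hD0 ξ₁, hD0 ξ₂, hD0 ξm]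
  -- one of γ ξ₁, γ ξ₂ has norm ≥ x/4
  have hdist : x / 2 ≤ ‖γ ξ₁‖ + ‖γ ξ₂‖ := by
    have h1 : ‖γ ξ₂ - γ ξ₁‖ = (ξ₂ - ξ₁) * x := by
      have : γ ξ₂ - γ ξ₁ = (ξ₂ - ξ₁) • ζ := by
        simp only [hγ]; rw [sub_smul]; abel
      rw [this, norm_smul, Real.norm_eq_abs, abs_of_pos (by
        have := hξ₁.2; have := hξ₂.1; linarith)]
    have h2 : x / 2 ≤ (ξ₂ - ξ₁) * x := by
      have := hξ₁.2; have := hξ₂.1; nlinarith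
    calc x / 2 ≤ ‖γ ξ₂ - γ ξ₁‖ := by rw [h1]; exact h2
      _ ≤ ‖γ ξ₂‖ + ‖γ ξ₁‖ := norm_sub_le _ _
      _ = ‖γ ξ₁‖ + ‖γ ξ₂‖ := by ring
  have hgood : ∃ ξ ∈ ({ξ₁, ξ₂} : Set ℝ), x / 4 ≤ ‖γ ξ‖ := by
    by_contra h
    push_neg at h
    have h1 := h ξ₁ (by simp)
    have h2 := h ξ₂ (by simp)
    linarith
  obtain ⟨ξ, hξmem, hξnorm⟩ := hgood
  -- lower bound on D ξ
  have hp2 : (0:ℝ) ≤ p - 2 := by linarith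
  have hq2 : (0:ℝ) ≤ q - 2 := by linarith
  have hDξ : ν * ((x/4) ^ (p-2) + a * (x/4) ^ (q-2)) * x ^ 2 ≤ D ξ := by
    refine le_trans ?_ (hmono (γ ξ) ζ)
    have hx4 : (0:ℝ) ≤ x / 4 := by positivity
    have h1 : (x/4) ^ (p-2) ≤ ‖γ ξ‖ ^ (p-2) := Real.rpow_le_rpow hx4 hξnorm hp2
    have h2 : (x/4) ^ (q-2) ≤ ‖γ ξ‖ ^ (q-2) := Real.rpow_le_rpow hx4 hξnorm hq2
    have hxsq : (0:ℝ) ≤ x ^ 2 := sq_nonneg x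
    rw [← hx]
    have h3 : (x/4) ^ (p-2) + a * (x/4) ^ (q-2) ≤ ‖γ ξ‖ ^ (p-2) + a * ‖γ ξ‖ ^ (q-2) :=
      add_le_add h1 (mul_le_mul_of_nonneg_left h2 ha)
    exact mul_le_mul_of_nonneg_right (mul_le_mul_of_nonneg_left h3 hν.le) hxsq
  -- the key analytic inequality
  have key : ν * 4 ^ (1 - q) * (x ^ p + a * x ^ q) ≤ g 1 - g 0 := by
    refine le_trans ?_ (le_trans (by linarith [hDξ] :
      (1/4) * (ν * ((x/4) ^ (p-2) + a * (x/4) ^ (q-2)) * x ^ 2) ≤ (1/4) * D ξ)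
      (hmax ξ hξmem))
    have e1 : (x/4) ^ (p-2) * x ^ 2 = 4 ^ (2 - p) * x ^ p := by
      rw [Real.div_rpow (le_of_lt hxpos) (by norm_num), ← Real.rpow_natCast x 2]
      rw [div_mul_eq_mul_div, ← Real.rpow_add hxpos]
      rw [show p - 2 + (2:ℕ) = p by push_cast; ring]
      rw [div_eq_mul_inv, ← Real.rpow_neg (by norm_num : (0:ℝ) ≤ 4)]
      rw [show -(p-2) = 2 - p by ring]; ring
    have e2 : (x/4) ^ (q-2) * x ^ 2 = 4 ^ (2 - q) * x ^ q := by
      rw [Real.div_rpow (le_of_lt hxpos) (by norm_num), ← Real.rpow_natCast x 2]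
      rw [div_mul_eq_mul_div, ← Real.rpow_add hxpos]
      rw [show q - 2 + (2:ℕ) = q by push_cast; ring]
      rw [div_eq_mul_inv, ← Real.rpow_neg (by norm_num : (0:ℝ) ≤ 4)]
      rw [show -(q-2) = 2 - q by ring]; ring
    have e3 : (4:ℝ) ^ (2 - q) ≤ 4 ^ (2 - p) :=
      Real.rpow_le_rpow_left_iff (by norm_num : (1:ℝ) < 4) |>.mpr (by linarith)
    have h4q : (0:ℝ) < 4 ^ (2 - q) := Real.rpow_pos_of_pos (by norm_num) _
    have hxp : (0:ℝ) ≤ x ^ p := Real.rpow_nonneg (le_of_lt hxpos) p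
    have hxq : (0:ℝ) ≤ x ^ q := Real.rpow_nonneg (le_of_lt hxpos) q
    have expand : (1/4) * (ν * ((x/4) ^ (p-2) + a * (x/4) ^ (q-2)) * x ^ 2)
        = ν / 4 * ((x/4) ^ (p-2) * x^2) + ν / 4 * a * ((x/4) ^ (q-2) * x^2) := by ring
    rw [expand, e1, e2]
    have e4 : ν * 4 ^ (1 - q) = ν / 4 * 4 ^ (2 - q) := by
      rw [show (2:ℝ) - q = 1 + (1 - q) by ring, Real.rpow_add (by norm_num),
        Real.rpow_one]
      ring
    rw [e4]
    nlinarith [mul_le_mul_of_nonneg_right e3 hxp, mul_nonneg (mul_nonneg ha h4q.le) hxq]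
  -- conclude
  have hgg : ⟪A z₁ - A z₂, z₁ - z₂⟫ = g 1 - g 0 := by
    simp [hg, hγ1, hγ0, inner_sub_left, hζ]
  rw [hgg]
  have hcge : (4:ℝ) ^ (q-1) / ν ≤ c := le_max_right _ _
  have hg10 : 0 ≤ g 1 - g 0 := by
    refine le_trans ?_ key
    positivity
  have h4ν : (0:ℝ) < 4 ^ (q-1) / ν := by positivity
  have h41 : (4:ℝ) ^ (q-1) / ν * (ν * 4 ^ (1-q)) = 1 := by
    have : (4:ℝ) ^ (q-1) * 4 ^ (1-q) = 1 := by
      rw [← Real.rpow_add (by norm_num : (0:ℝ) < 4)]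
      norm_num
    field_simp
    nlinarith [this]
  calc x ^ p + a * x ^ q
      = (4 ^ (q-1) / ν) * (ν * 4 ^ (1 - q) * (x ^ p + a * x ^ q)) := by
        rw [← mul_assoc, h41, one_mul]
    _ ≤ (4 ^ (q-1) / ν) * (g 1 - g 0) := by
        exact mul_le_mul_of_nonneg_left key h4ν.le
    _ ≤ c * (g 1 - g 0) := mul_le_mul_of_nonneg_right hcge hg10
end

section
/- Let n ≥ 2 be an integer and let p, q, α be reals with 2 ≤ p ≤ n, p < q, α ∈ (0,1], and suppose the condition (q−1)/(p−1) < 1 + α/(n−1) holds. For p̄ ∈ [n(p−1)/(n−1), p] define m(p̄) := max{ n(p̄ + q − p)/(n + p̄ + q − p) , 1 } (the inverse Sobolev conjugate of p̄ + q − p). Then m(p̄) < p̄ for every p̄ ∈ [n(p−1)/(n−1), p]. -/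
/-- Inequality (3.6) of the paper: `m(p̄) < p̄` on `[n(p-1)/(n-1), p]`, where
`m(p̄) = (p̄ + (q-p))_*` is the inverse Sobolev conjugate of `p̄ + q - p`. -/
theorem stmt_7 (n : ℕ) (hn : 2 ≤ n) (p q α : ℝ) (hp : 2 ≤ p) (hpn : p ≤ (n : ℝ))
    (hpq : p < q) (hα : α ∈ Set.Ioc (0:ℝ) 1)
    (hrate : (q - 1) / (p - 1) < 1 + α / ((n : ℝ) - 1)) :
    ∀ pbar ∈ Set.Icc ((n : ℝ) * (p - 1) / ((n : ℝ) - 1)) p,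
      max ((n : ℝ) * (pbar + q - p) / ((n : ℝ) + pbar + q - p)) 1 < pbar := by
  rintro pbar ⟨h1, h2⟩
  have hn' : (2:ℝ) ≤ (n:ℝ) := by exact_mod_cast hn
  have hn1 : (0:ℝ) < (n:ℝ) - 1 := by linarith
  have hp1 : (0:ℝ) < p - 1 := by linarith
  obtain ⟨hα0, hα1⟩ := hα
  -- pbar > 1
  have hpbar1 : 1 < pbar := by
    have : (1:ℝ) < (n:ℝ) * (p - 1) / ((n:ℝ) - 1) := by
      rw [lt_div_iff₀ hn1]; nlinarith
    linarith
  -- from hrate: (q - p) * (n - 1) < (p - 1) * α ≤ p - 1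
  have hkey : (q - p) * ((n:ℝ) - 1) < p - 1 := by
    rw [div_lt_iff₀ hp1] at hrate
    have e : (1 + α / ((n:ℝ) - 1)) * (p - 1) * ((n:ℝ) - 1)
        = ((n:ℝ) - 1 + α) * (p - 1) := by
      field_simp
    have hrate' := mul_lt_mul_of_pos_right hrate hn1
    rw [e] at hrate'
    nlinarith
  -- from h1: n * (p - 1) ≤ pbar * (n - 1)
  have h1' : (n:ℝ) * (p - 1) ≤ pbar * ((n:ℝ) - 1) := by
    rwa [div_le_iff₀ hn1] at h1
  -- hence (q - p) * n < pbar
  have hdn : (q - p) * (n:ℝ) < pbar := by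
    have := mul_lt_mul_of_pos_right hkey (by positivity : (0:ℝ) < (n:ℝ))
    nlinarith
  have hd : 0 < q - p := by linarith
  have hden : 0 < (n:ℝ) + pbar + q - p := by linarith
  refine max_lt ?_ hpbar1
  rw [div_lt_iff₀ hden]
  nlinarith [mul_pos hd (by linarith : (0:ℝ) < pbar)]
end

section
/- Let n ≥ 2 be an integer and let p, q, α be reals with 2 ≤ p ≤ n, p < q, α ∈ (0,1], and suppose the condition (q−1)/(p−1) < 1 + α/(n−1) holds. Define κ := (1/2)·( max{ n(q−p)/α , n(n+α)(p−1)/( n(n−1) + (n+α)(p−1) ) } + n(p−1)/(n−1) ), and for p̄ ∈ [n(p−1)/(n−1), p] define m(p̄) := max{ n(p̄ + q − p)/(n + p̄ + q − p) , 1 } (the inverse Sobolev conjugate of p̄ + q − p). Then m( n(p−1)/(n−1) ) < κ. -/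
private lemma sob_mono (N x y : ℝ) (hN : 0 < N) (hx : 0 < x) (hxy : x < y) :
    N * x / (N + x) < N * y / (N + y) := by
  rw [div_lt_div_iff₀ (by linarith) (by linarith)]
  nlinarith [mul_lt_mul_of_pos_left hxy (mul_pos hN hN)]

set_option maxHeartbeats 1000000 in
/-- Display (3.7) of the paper: `m(n(p-1)/(n-1)) < κ`, where `m` is the inverse
Sobolev conjugate map `m(p̄) = (p̄ + (q-p))_*` and `κ` is the exponent of (3.3). -/
theorem stmt_8 (n : ℕ) (hn : 2 ≤ n) (p q α : ℝ) (hp : 2 ≤ p) (hpn : p ≤ (n : ℝ))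
    (hpq : p < q) (hα : α ∈ Set.Ioc (0:ℝ) 1)
    (hrate : (q - 1) / (p - 1) < 1 + α / ((n : ℝ) - 1)) :
    max ((n : ℝ) * ((n : ℝ) * (p - 1) / ((n : ℝ) - 1) + q - p) /
        ((n : ℝ) + ((n : ℝ) * (p - 1) / ((n : ℝ) - 1) + q - p))) 1
      < (1/2) * (max ((n : ℝ) * (q - p) / α)
          ((n : ℝ) * ((n : ℝ) + α) * (p - 1) /
            ((n : ℝ) * ((n : ℝ) - 1) + ((n : ℝ) + α) * (p - 1)))
        + (n : ℝ) * (p - 1) / ((n : ℝ) - 1)) := by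
  obtain ⟨hα0, hα1⟩ := hα
  have hN : (2:ℝ) ≤ (n:ℝ) := by exact_mod_cast hn
  set N := (n:ℝ) with hNdef
  have hN0 : (0:ℝ) < N := by linarith
  have hN1 : (0:ℝ) < N - 1 := by linarith
  have hp1 : (0:ℝ) < p - 1 := by linarith
  set A := N * (p - 1) / (N - 1) with hA
  set B := N * (q - p) / α with hB
  set C := N * (N + α) * (p - 1) / (N * (N - 1) + (N + α) * (p - 1)) with hC
  set t := (p - 1) * (N + α) / (N - 1) with ht
  set s := A + q - p with hs
  clear_value N A B C t s
  have hdenC : 0 < N * (N - 1) + (N + α) * (p - 1) := by nlinarith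
  have hApos : 1 < A := by
    rw [hA, lt_div_iff₀ hN1]; nlinarith
  -- clear denominators in hrate
  have key : (q - 1) * (N - 1) < ((N - 1) + α) * (p - 1) := by
    rw [div_lt_iff₀ hp1] at hrate
    have h2 : (1 + α / (N - 1)) * (p - 1) * (N - 1) = ((N - 1) + α) * (p - 1) := by
      field_simp
    nlinarith [mul_lt_mul_of_pos_right hrate hN1]
  -- s < t
  have hsN1 : s * (N - 1) = N * (p - 1) + (q - p) * (N - 1) := by
    rw [hs, hA]; field_simp; ring
  have htN1 : t * (N - 1) = (p - 1) * (N + α) := by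
    rw [ht]; field_simp
  have hst : s < t := by
    have : s * (N - 1) < t * (N - 1) := by rw [hsN1, htN1]; nlinarith
    exact lt_of_mul_lt_mul_right this (le_of_lt hN1)
  have hspos : 0 < s := by rw [hs]; nlinarith
  -- C = N*t/(N+t)
  have htpos : 0 < t := by
    rw [ht]; exact div_pos (by nlinarith) hN1
  have hNt : 0 < N + t := by linarith
  have hNt' : 0 < N + (p - 1) * (N + α) / (N - 1) := by rw [← ht]; exact hNt
  have hCt : N * t / (N + t) = C := by
    rw [ht, hC]
    rw [div_eq_div_iff hNt'.ne' hdenC.ne']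
    field_simp
  -- C ≤ A
  have hCA : C ≤ A := by
    rw [hC, hA, div_le_div_iff₀ hdenC hN1]
    have h3 : α * (N - 1) ≤ (N + α) * (p - 1) := by
      linarith [mul_nonneg (by linarith : (0:ℝ) ≤ N + α) (by linarith : (0:ℝ) ≤ p - 2),
        mul_nonneg (by linarith : (0:ℝ) ≤ 1 - α) hN0.le]
    linarith [mul_le_mul_of_nonneg_left h3 (mul_nonneg hN0.le hp1.le)]
  -- 1 ≤ C
  have hC1 : 1 ≤ C := by
    have h5 : N ≤ (N + α) * (p - 1) := by
      linarith [mul_nonneg (by linarith : (0:ℝ) ≤ N + α) (by linarith : (0:ℝ) ≤ p - 2)]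
    rw [hC, le_div_iff₀ hdenC]
    linarith [mul_le_mul_of_nonneg_left h5 (by linarith : (0:ℝ) ≤ N - 1)]
  have hBC : C ≤ max B C := le_max_right B C
  refine max_lt ?_ ?_
  · calc N * s / (N + s) < N * t / (N + t) := sob_mono N s t hN0 hspos hst
      _ = C := hCt
      _ ≤ 1 / 2 * (max B C + A) := by linarith
  · linarith
end
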